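/- Let r > 0, L₃ > 0, x₀ ∈ ℝᵈ, and let f̂ be twice continuously differentiable on an open set containing the closed ball B̄_{2r}(x₀), with Hessian Ĥ that is L₃-Lipschitz (in operator norm) on B̄_{2r}(x₀) and satisfies ⟨Ĥ(x)v, v⟩ ≥ 3L₃r‖v‖² for all x ∈ B̄_{2r}(x₀) and all v. Suppose x̂* ∈ B̄_r(x₀) satisfies ∇f̂(x̂*) = 0. Let (x_k) be a sequence with the given x₀ as initial point and satisfying the Newton relation Ĥ(x_k)(x_k − x_{k+1}) = ∇f̂(x_k) for all k ≥ 0. Then ‖x_k − x̂*‖ ≤ r·2^{1 − 2^k} for every k ≥ 0 (so in particular ‖x_k − x₀‖ ≤ 2r for all k), and x_k converges to x̂*. -/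

import Mathlib

open Set

private lemma newton_aux1 {L r nw E : ℝ} (hL : 0 < L) (hw : 0 < nw)
    (h6 : 3 * L * r * nw ^ 2 ≤ L * E ^ 2 * nw) : 3 * r * nw ≤ E ^ 2 := by
  nlinarith [mul_pos hL hw]

private lemma newton_aux2 {r nw p : ℝ} (hr : 0 < r) (hp : 0 < p)
    (h : 3 * r * nw ≤ 2 * r ^ 2 * p) : nw ≤ r * p := by
  nlinarith [mul_pos (mul_pos hr hr) hp]

/-- Convergence of the Newton iterations in qBnB(3): if `f̂` is `C²` on an open set
containing `B̄_{2r}(x₀)` with `L₃`-Lipschitz Hessian there satisfying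
`⟨Ĥ(x)v, v⟩ ≥ 3L₃r‖v‖²` on `B̄_{2r}(x₀)`, `x̂* ∈ B̄_r(x₀)` is a critical point of `f̂`,
and `(x_k)` is the Newton sequence started at `x₀`
(`Ĥ(x_k)(x_k - x_{k+1}) = ∇f̂(x_k)`), then `‖x_k - x̂*‖ ≤ r·2^{1 - 2^k}` for all `k`
(in particular `‖x_k - x₀‖ ≤ 2r`), and `x_k → x̂*`. -/
theorem newton_iterations_converge
    {d : ℕ} {x₀ : EuclideanSpace ℝ (Fin d)} {r L₃ : ℝ} (hr : 0 < r) (hL₃ : 0 < L₃)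
    {V : Set (EuclideanSpace ℝ (Fin d))} (hVopen : IsOpen V)
    (hball : Metric.closedBall x₀ (2 * r) ⊆ V)
    {f : EuclideanSpace ℝ (Fin d) → ℝ} (hf : ContDiffOn ℝ 2 f V)
    (hLip : ∀ x ∈ Metric.closedBall x₀ (2 * r), ∀ y ∈ Metric.closedBall x₀ (2 * r),
      ‖fderiv ℝ (fderiv ℝ f) x - fderiv ℝ (fderiv ℝ f) y‖ ≤ L₃ * ‖x - y‖)
    (hlow : ∀ x ∈ Metric.closedBall x₀ (2 * r), ∀ v : EuclideanSpace ℝ (Fin d),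
      fderiv ℝ (fderiv ℝ f) x v v ≥ 3 * L₃ * r * ‖v‖ ^ 2)
    {xhat : EuclideanSpace ℝ (Fin d)} (hxhat : xhat ∈ Metric.closedBall x₀ r)
    (hcrit : fderiv ℝ f xhat = 0)
    (x : ℕ → EuclideanSpace ℝ (Fin d)) (hx0 : x 0 = x₀)
    (hNewton : ∀ k : ℕ, ∀ v : EuclideanSpace ℝ (Fin d),
      fderiv ℝ (fderiv ℝ f) (x k) (x k - x (k + 1)) v = fderiv ℝ f (x k) v) :
    (∀ k : ℕ, ‖x k - xhat‖ ≤ r * (2 : ℝ) ^ ((1 : ℝ) - 2 ^ k)) ∧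
    (∀ k : ℕ, ‖x k - x₀‖ ≤ 2 * r) ∧
    Filter.Tendsto x Filter.atTop (nhds xhat) := by
  have hC1 : ContDiffOn ℝ 1 (fderiv ℝ f) V := hf.fderiv_of_isOpen hVopen (by norm_num)
  have hFd : ∀ y ∈ V, HasFDerivAt (fderiv ℝ f) (fderiv ℝ (fderiv ℝ f) y) y := fun y hy =>
    ((hC1.differentiableOn one_ne_zero).differentiableAt (hVopen.mem_nhds hy)).hasFDerivAt
  -- key Taylor estimate
  have key : ∀ a ∈ Metric.closedBall x₀ (2*r), ∀ b ∈ Metric.closedBall x₀ (2*r),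
      ∀ v : EuclideanSpace ℝ (Fin d),
      |fderiv ℝ f b v - fderiv ℝ f a v - fderiv ℝ (fderiv ℝ f) b (b - a) v|
        ≤ L₃ * ‖b - a‖^2 * ‖v‖ := by
    intro a ha b hb v
    set e := b - a with he
    set γ : ℝ → EuclideanSpace ℝ (Fin d) := fun t => a + t • e with hγ
    have hseg : ∀ t ∈ Set.Icc (0:ℝ) 1, γ t ∈ Metric.closedBall x₀ (2*r) := by
      intro t ht
      have hmem : γ t ∈ segment ℝ a b := by
        rw [segment_eq_image']
        exact ⟨t, ht, rfl⟩
      exact (convex_closedBall x₀ (2*r)).segment_subset ha hb hmem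
    set c : ℝ := fderiv ℝ (fderiv ℝ f) b e v with hc
    set g : ℝ → ℝ := fun t => fderiv ℝ f (γ t) v - t * c with hg
    have hderiv : ∀ t ∈ Set.Icc (0:ℝ) 1,
        HasDerivWithinAt g (fderiv ℝ (fderiv ℝ f) (γ t) e v - c) (Set.Icc 0 1) t := by
      intro t ht
      have hγt : HasDerivAt γ e t := by
        simpa [hγ] using ((hasDerivAt_id t).smul_const e).const_add a
      have hF : HasFDerivAt (fderiv ℝ f) (fderiv ℝ (fderiv ℝ f) (γ t)) (γ t) :=
        hFd _ (hball (hseg t ht))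
      have h1 : HasDerivAt (fun s => fderiv ℝ f (γ s)) (fderiv ℝ (fderiv ℝ f) (γ t) e) t :=
        hF.comp_hasDerivAt t hγt
      have h2 : HasDerivAt (fun s => fderiv ℝ f (γ s) v)
          (fderiv ℝ (fderiv ℝ f) (γ t) e v) t := by
        simpa using h1.clm_apply (hasDerivAt_const t v)
      exact (h2.sub (hasDerivAt_mul_const c)).hasDerivWithinAt
    have hbound : ∀ t ∈ Set.Ico (0:ℝ) 1,
        ‖fderiv ℝ (fderiv ℝ f) (γ t) e v - c‖ ≤ L₃ * ‖e‖^2 * ‖v‖ := by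
      intro t ht
      have hdiff : fderiv ℝ (fderiv ℝ f) (γ t) e v - c
          = ((fderiv ℝ (fderiv ℝ f) (γ t) - fderiv ℝ (fderiv ℝ f) b) e) v := by
        simp [hc]
      rw [hdiff]
      have hγb : γ t - b = (t - 1) • e := by
        simp only [hγ, he]
        module
      have hnb : ‖γ t - b‖ ≤ ‖e‖ := by
        rw [hγb, norm_smul]
        have : |t - 1| ≤ 1 := by
          rw [abs_le]; constructor <;> [linarith [ht.1]; linarith [ht.2.le]]
        calc ‖t - 1‖ * ‖e‖ ≤ 1 * ‖e‖ := by
              apply mul_le_mul_of_nonneg_right _ (norm_nonneg e)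
              simpa [Real.norm_eq_abs] using this
          _ = ‖e‖ := one_mul _
      have hlip := hLip (γ t) (hseg t (Set.Ico_subset_Icc_self ht)) b hb
      set A := fderiv ℝ (fderiv ℝ f) (γ t) - fderiv ℝ (fderiv ℝ f) b with hA
      calc ‖(A e) v‖ ≤ ‖A e‖ * ‖v‖ := (A e).le_opNorm v
        _ ≤ (‖A‖ * ‖e‖) * ‖v‖ :=
            mul_le_mul_of_nonneg_right (A.le_opNorm e) (norm_nonneg v)
        _ ≤ L₃ * ‖e‖^2 * ‖v‖ := by
            have h4 : ‖A‖ ≤ L₃ * ‖e‖ := hlip.trans (by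
              exact mul_le_mul_of_nonneg_left hnb hL₃.le)
            have h5 := mul_le_mul_of_nonneg_right
              (mul_le_mul_of_nonneg_right h4 (norm_nonneg e)) (norm_nonneg v)
            nlinarith [h5]
    have hfin := norm_image_sub_le_of_norm_deriv_le_segment' hderiv hbound 1
      (by constructor <;> norm_num)
    have hg1 : g 1 = fderiv ℝ f b v - c := by
      simp [hg, hγ, he]
    have hg0 : g 0 = fderiv ℝ f a v := by
      simp [hg, hγ]
    rw [hg1, hg0] at hfin
    calc |fderiv ℝ f b v - fderiv ℝ f a v - fderiv ℝ (fderiv ℝ f) b (b - a) v|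
        = ‖fderiv ℝ f b v - c - fderiv ℝ f a v‖ := by rw [← he]; congr 1; ring
      _ ≤ L₃ * ‖e‖^2 * ‖v‖ * (1 - 0) := hfin
      _ = L₃ * ‖b - a‖^2 * ‖v‖ := by rw [← he]; ring
  have hexp_le : ∀ k : ℕ, (2:ℝ) ^ ((1:ℝ) - 2 ^ k) ≤ 1 := by
    intro k
    apply Real.rpow_le_one_of_one_le_of_nonpos one_le_two
    have h1 : (1:ℝ) ≤ 2 ^ k := one_le_pow₀ one_le_two
    linarith
  have hrp : ∀ k : ℕ, (0:ℝ) < (2:ℝ) ^ ((1:ℝ) - 2 ^ k) :=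
    fun k => Real.rpow_pos_of_pos two_pos _
  have hr1 : ∀ k : ℕ, r * (2:ℝ) ^ ((1:ℝ) - 2 ^ k) ≤ r := by
    intro k
    have h := mul_le_mul_of_nonneg_left (hexp_le k) hr.le
    simpa using h
  have part1 : ∀ k, ‖x k - xhat‖ ≤ r * (2:ℝ) ^ ((1:ℝ) - 2 ^ k) := by
    intro k
    induction k with
    | zero =>
      rw [pow_zero, show (1:ℝ) - 1 = 0 by ring, Real.rpow_zero, mul_one, hx0]
      have h := Metric.mem_closedBall.mp hxhat
      rw [← dist_eq_norm, dist_comm]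
      exact h
    | succ k ih =>
      have hxk_x : ‖x k - xhat‖ ≤ r := ih.trans (hr1 k)
      have hxkball : x k ∈ Metric.closedBall x₀ (2*r) := by
        rw [Metric.mem_closedBall]
        have h1 : dist (x k) xhat ≤ r := by rw [dist_eq_norm]; exact hxk_x
        have h2 : dist xhat x₀ ≤ r := Metric.mem_closedBall.mp hxhat
        calc dist (x k) x₀ ≤ dist (x k) xhat + dist xhat x₀ := dist_triangle _ _ _
          _ ≤ 2*r := by linarith
      have hxhatball : xhat ∈ Metric.closedBall x₀ (2*r) :=
        Metric.closedBall_subset_closedBall (by linarith) hxhat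
      set w := x (k+1) - xhat with hw
      have hbd : |fderiv ℝ (fderiv ℝ f) (x k) w w| ≤ L₃ * ‖x k - xhat‖^2 * ‖w‖ := by
        have hk := key xhat hxhatball (x k) hxkball w
        have hre : fderiv ℝ (fderiv ℝ f) (x k) w w
            = -(fderiv ℝ f (x k) w - fderiv ℝ f xhat w
                - fderiv ℝ (fderiv ℝ f) (x k) (x k - xhat) w) := by
          have hmap : fderiv ℝ (fderiv ℝ f) (x k) (x k - xhat) w
              = fderiv ℝ (fderiv ℝ f) (x k) (x k - x (k+1)) w
                + fderiv ℝ (fderiv ℝ f) (x k) w w := by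
            rw [← ContinuousLinearMap.add_apply, ← map_add]
            congr 2
            rw [hw]; abel
          rw [hmap, hNewton k w, hcrit]
          simp
        rw [hre, abs_neg]
        exact hk
      have hlow' := hlow (x k) hxkball w
      have hquad : 3 * r * ‖w‖ ≤ ‖x k - xhat‖^2 ∨ ‖w‖ = 0 := by
        rcases eq_or_lt_of_le (norm_nonneg w) with h0 | h0
        · right; exact h0.symm
        · left
          have h6 : 3 * L₃ * r * ‖w‖^2 ≤ L₃ * ‖x k - xhat‖^2 * ‖w‖ :=
            le_trans (le_trans hlow' (le_abs_self _)) hbd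
          exact newton_aux1 hL₃ h0 h6
      have hE : ‖x k - xhat‖^2 ≤ (r * (2:ℝ) ^ ((1:ℝ) - 2^k))^2 :=
        pow_le_pow_left₀ (norm_nonneg _) ih 2
      have h2s : ((2:ℝ) ^ ((1:ℝ) - 2^k))^2 = 2 * (2:ℝ) ^ ((1:ℝ) - 2^(k+1)) := by
        rw [sq, ← Real.rpow_add two_pos,
          show (1:ℝ) - 2^k + ((1:ℝ) - 2^k) = 1 + ((1:ℝ) - 2^(k+1)) by rw [pow_succ]; ring,
          Real.rpow_add two_pos, Real.rpow_one]
      rcases hquad with hq | hq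
      · have hp := hrp (k+1)
        have hfin : 3 * r * ‖w‖ ≤ 2 * r^2 * (2:ℝ)^((1:ℝ) - 2^(k+1)) := by
          calc 3*r*‖w‖ ≤ ‖x k - xhat‖^2 := hq
            _ ≤ (r * (2:ℝ) ^ ((1:ℝ) - 2^k))^2 := hE
            _ = 2 * r^2 * (2:ℝ)^((1:ℝ) - 2^(k+1)) := by rw [mul_pow, h2s]; ring
        exact newton_aux2 hr hp hfin
      · rw [hq]
        positivity
  have part2 : ∀ k, ‖x k - x₀‖ ≤ 2 * r := by
    intro k
    have h1 : ‖x k - xhat‖ ≤ r := (part1 k).trans (hr1 k)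
    have h2 : dist xhat x₀ ≤ r := Metric.mem_closedBall.mp hxhat
    rw [← dist_eq_norm]
    calc dist (x k) x₀ ≤ dist (x k) xhat + dist xhat x₀ := dist_triangle _ _ _
      _ ≤ 2*r := by rw [dist_eq_norm]; linarith
  refine ⟨part1, part2, ?_⟩
  have hub : ∀ k : ℕ, r * (2:ℝ)^((1:ℝ) - 2^k) ≤ (2*r) * (1/2:ℝ)^k := by
    intro k
    have h1 : (2:ℝ)^((1:ℝ) - 2^k) ≤ (2:ℝ)^((1:ℝ) - (k:ℝ)) := by
      apply (Real.rpow_le_rpow_left_iff (by norm_num : (1:ℝ) < 2)).mpr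
      have hk2 : (k:ℝ) ≤ (2:ℝ)^k := by
        have h := (Nat.lt_two_pow_self (n := k)).le
        calc (k:ℝ) ≤ ((2^k : ℕ):ℝ) := by exact_mod_cast h
          _ = (2:ℝ)^k := by push_cast; ring
      linarith
    have h2 : (2:ℝ)^((1:ℝ) - (k:ℝ)) = 2 * (1/2:ℝ)^k := by
      rw [Real.rpow_sub two_pos, Real.rpow_one, Real.rpow_natCast, one_div, inv_pow]
      ring
    calc r * (2:ℝ)^((1:ℝ)-2^k) ≤ r * (2:ℝ)^((1:ℝ)-(k:ℝ)) :=
          mul_le_mul_of_nonneg_left h1 hr.le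
      _ = (2*r) * (1/2:ℝ)^k := by rw [h2]; ring
  rw [tendsto_iff_norm_sub_tendsto_zero]
  apply squeeze_zero (fun k => norm_nonneg _) (fun k => (part1 k).trans (hub k))
  have ht := (tendsto_pow_atTop_nhds_zero_of_lt_one (by norm_num : (0:ℝ) ≤ 1/2)
    (by norm_num : (1/2:ℝ) < 1)).const_mul (2*r)
  simpa using ht
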